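/- For u ∈ ℝ³ let û denote the 3×3 skew-symmetric matrix with û·v = u × v for all v ∈ ℝ³ (the hat map), and for κ, ε ∈ ℝ³ let ad(κ,ε) denote the 6×6 real block matrix [[κ̂, 0],[ε̂, κ̂]]. Fix a nonzero real number h and Ω ∈ ℝ⁶, and for β ∈ ℝ⁶ set A(β) = h·I₆ − (h³/12)·ad(β). Then the map F : ℝ⁶ → ℝ⁶ defined by F(β) = A(β)⁻¹·Ω is differentiable at every β, and its Fréchet derivative in the direction v ∈ ℝ⁶ is DF(β)[v] = −(h³/12)·A(β)⁻¹·ad(F(β))·v. -/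

import Mathlib

open Matrix

/-- The hat map: `hat u` is the 3×3 skew-symmetric matrix with `hat u *ᵥ v = u × v`. -/
def hat (u : Fin 3 → ℝ) : Matrix (Fin 3) (Fin 3) ℝ :=
  !![0, -u 2, u 1; u 2, 0, -u 0; -u 1, u 0, 0]

/-- The adjoint matrix of `x ∈ ℝ⁶ ≅ ℝ³ × ℝ³`: the 6×6 block matrix `[[κ̂, 0], [ε̂, κ̂]]`,
where `κ` and `ε` are the two 3-dimensional components of `x`. -/
def adMat (x : Fin 3 ⊕ Fin 3 → ℝ) : Matrix (Fin 3 ⊕ Fin 3) (Fin 3 ⊕ Fin 3) ℝ :=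
  Matrix.fromBlocks (hat (x ∘ Sum.inl)) 0 (hat (x ∘ Sum.inr)) (hat (x ∘ Sum.inl))

lemma adMat_add (x y : Fin 3 ⊕ Fin 3 → ℝ) : adMat (x + y) = adMat x + adMat y := by
  ext (i|i) (j|j) <;> fin_cases i <;> fin_cases j <;>
    simp [adMat, hat, Matrix.fromBlocks] <;> ring

lemma adMat_smul (a : ℝ) (x : Fin 3 ⊕ Fin 3 → ℝ) : adMat (a • x) = a • adMat x := by
  ext (i|i) (j|j) <;> fin_cases i <;> fin_cases j <;>
    simp [adMat, hat, Matrix.fromBlocks]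

lemma adMat_antisym (x y : Fin 3 ⊕ Fin 3 → ℝ) :
    adMat x *ᵥ y = -(adMat y *ᵥ x) := by
  ext (i|i) <;> fin_cases i <;>
    simp [adMat, hat, Matrix.mulVec, dotProduct, Fintype.sum_sum_type,
      Fin.sum_univ_succ, Matrix.fromBlocks] <;> ring

lemma A_isUnit (h : ℝ) (hh : h ≠ 0) (β : Fin 3 ⊕ Fin 3 → ℝ) :
    IsUnit (h • (1 : Matrix (Fin 3 ⊕ Fin 3) (Fin 3 ⊕ Fin 3) ℝ) - (h ^ 3 / 12) • adMat β) := by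
  rw [Matrix.isUnit_iff_isUnit_det, isUnit_iff_ne_zero]
  set c : ℝ := h ^ 3 / 12
  have hblock : h • (1 : Matrix (Fin 3 ⊕ Fin 3) (Fin 3 ⊕ Fin 3) ℝ) - c • adMat β =
      Matrix.fromBlocks (h • 1 - c • hat (β ∘ Sum.inl)) 0 (-(c • hat (β ∘ Sum.inr)))
        (h • 1 - c • hat (β ∘ Sum.inl)) := by
    ext (i|i) (j|j) <;>
      simp [adMat, Matrix.fromBlocks, Matrix.one_apply, Sum.elim]
  rw [hblock, Matrix.det_fromBlocks_zero₁₂]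
  have hd : (h • 1 - c • hat (β ∘ Sum.inl)).det =
      h * (h ^ 2 + c ^ 2 * ((β (Sum.inl 0)) ^ 2 + (β (Sum.inl 1)) ^ 2 + (β (Sum.inl 2)) ^ 2)) := by
    simp [Matrix.det_fin_three, hat, Matrix.one_apply]
    ring
  rw [hd]
  have : (0:ℝ) < h ^ 2 + c ^ 2 * ((β (Sum.inl 0)) ^ 2 + (β (Sum.inl 1)) ^ 2 + (β (Sum.inl 2)) ^ 2) := by
    positivity
  exact mul_ne_zero (mul_ne_zero hh this.ne') (mul_ne_zero hh this.ne')

attribute [local instance] Matrix.linftyOpNormedAddCommGroup Matrix.linftyOpNormedSpace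
  Matrix.linftyOpNormedRing Matrix.linftyOpNormedAlgebra

/-- **Differentiability of the mean-strain reconstruction map (strain-slope Jacobian `J₃`).**
Fix `h ≠ 0` and `Ω ∈ ℝ⁶`, and set `A(β) = h • I₆ − (h³/12) • ad(β)` and `F(β) = A(β)⁻¹ Ω`.
Then `F` is (Fréchet) differentiable at every `β`, with derivative
`DF(β)[v] = −(h³/12) • A(β)⁻¹ (ad(F(β)) v)`. -/
theorem meanStrain_hasFDerivAt
    (h : ℝ) (hh : h ≠ 0) (Ω : Fin 3 ⊕ Fin 3 → ℝ)
    (A : (Fin 3 ⊕ Fin 3 → ℝ) → Matrix (Fin 3 ⊕ Fin 3) (Fin 3 ⊕ Fin 3) ℝ)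
    (hA : ∀ β, A β = h • (1 : Matrix (Fin 3 ⊕ Fin 3) (Fin 3 ⊕ Fin 3) ℝ)
        - (h ^ 3 / 12) • adMat β)
    (F : (Fin 3 ⊕ Fin 3 → ℝ) → (Fin 3 ⊕ Fin 3 → ℝ))
    (hF : ∀ β, F β = (A β)⁻¹ *ᵥ Ω) :
    ∀ β, ∃ D : (Fin 3 ⊕ Fin 3 → ℝ) →L[ℝ] (Fin 3 ⊕ Fin 3 → ℝ),
      HasFDerivAt F D β ∧
      ∀ v, D v = -(h ^ 3 / 12) • ((A β)⁻¹ *ᵥ (adMat (F β) *ᵥ v)) := by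
  intro β
  set c : ℝ := h ^ 3 / 12 with hc
  -- adMat as a continuous linear map
  let adL : (Fin 3 ⊕ Fin 3 → ℝ) →L[ℝ] Matrix (Fin 3 ⊕ Fin 3) (Fin 3 ⊕ Fin 3) ℝ :=
    LinearMap.toContinuousLinearMap
      { toFun := fun x => (-c) • adMat x,
        map_add' := fun x y => by simp only [adMat_add]; module,
        map_smul' := fun a x => by simp only [adMat_smul, RingHom.id_apply]; module }
  -- mulVec by Ω as a continuous linear map
  let mulVecL : Matrix (Fin 3 ⊕ Fin 3) (Fin 3 ⊕ Fin 3) ℝ →L[ℝ] (Fin 3 ⊕ Fin 3 → ℝ) :=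
    LinearMap.toContinuousLinearMap
      { toFun := fun M => M *ᵥ Ω,
        map_add' := fun M N => Matrix.add_mulVec M N Ω,
        map_smul' := fun a M => Matrix.smul_mulVec a M Ω }
  have hU : IsUnit (A β) := by rw [hA]; exact A_isUnit h hh β
  set u : (Matrix (Fin 3 ⊕ Fin 3) (Fin 3 ⊕ Fin 3) ℝ)ˣ := hU.unit with hu
  have hucoe : (↑u : Matrix (Fin 3 ⊕ Fin 3) (Fin 3 ⊕ Fin 3) ℝ) = A β := hU.unit_spec
  have huinv : (↑u⁻¹ : Matrix (Fin 3 ⊕ Fin 3) (Fin 3 ⊕ Fin 3) ℝ) = (A β)⁻¹ := by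
    rw [Matrix.nonsing_inv_eq_ringInverse, ← hucoe, Ring.inverse_unit]
  -- derivative of A
  have hdA : HasFDerivAt A adL β := by
    have h2 : HasFDerivAt (fun b => adL b)
        adL β := adL.hasFDerivAt (x := β)
    have := h2.const_add (h • (1 : Matrix (Fin 3 ⊕ Fin 3) (Fin 3 ⊕ Fin 3) ℝ))
    have hfun : (fun b => h • (1 : Matrix (Fin 3 ⊕ Fin 3) (Fin 3 ⊕ Fin 3) ℝ) + adL b) = A := by
      funext b; rw [hA b]
      show _ = _ - _
      rw [sub_eq_add_neg]
      congr 1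
      show -c • adMat b = _
      module
    rwa [hfun] at this
  -- derivative of Ring.inverse at A β
  have hinv : HasFDerivAt Ring.inverse
      (-ContinuousLinearMap.mulLeftRight ℝ _ ((A β)⁻¹) ((A β)⁻¹)) (A β) := by
    have := hasFDerivAt_ringInverse (𝕜 := ℝ) u
    rwa [hucoe, huinv] at this
  have hcomp : HasFDerivAt (fun b => mulVecL (Ring.inverse (A b)))
      (mulVecL.comp ((-ContinuousLinearMap.mulLeftRight ℝ _ ((A β)⁻¹) ((A β)⁻¹)).comp
        adL)) β :=
    (mulVecL.hasFDerivAt).comp β ((hinv.comp β hdA))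
  have hFeq : F = fun b => mulVecL (Ring.inverse (A b)) := by
    funext b
    rw [hF b, Matrix.nonsing_inv_eq_ringInverse]
    rfl
  refine ⟨_, hFeq ▸ hcomp, ?_⟩
  intro v
  have hFv : (A β)⁻¹ *ᵥ Ω = F β := (hF β).symm
  change mulVecL ((-ContinuousLinearMap.mulLeftRight ℝ _ ((A β)⁻¹) ((A β)⁻¹)) (adL v)) = _
  simp only [ContinuousLinearMap.coe_comp', Function.comp_apply,
    ContinuousLinearMap.smul_apply, ContinuousLinearMap.neg_apply,
    ContinuousLinearMap.mulLeftRight_apply]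
  have hadL : adL v = (-c) • adMat v := rfl
  have hmv : ∀ M, mulVecL M = M *ᵥ Ω := fun _ => rfl
  rw [hadL, hmv]
  rw [mul_smul_comm, smul_mul_assoc, ← neg_smul, neg_neg, Matrix.smul_mulVec,
    ← Matrix.mulVec_mulVec, ← Matrix.mulVec_mulVec, hFv, adMat_antisym v (F β),
    Matrix.mulVec_neg, smul_neg, ← neg_smul]
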